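/- Let a > 0, r ∈ ℝ with r ≤ 0, λ ≥ 0, and f(β) = (a/2)(β−r)² + λ|β(β−1)|. Then the global minimizer of f over (−∞, 0] is β* = min(0, (ar + λ)/(a + 2λ)), and this is in fact a global minimizer of f over all of ℝ. -/

import Mathlib

theorem product_penalty_global_min_left (a r l : ℝ) (ha : 0 < a) (hr : r ≤ 0) (hl : 0 ≤ l) :
    IsMinOn (fun β : ℝ => a / 2 * (β - r) ^ 2 + l * |β * (β - 1)|)
      (Set.Iic 0) (min 0 ((a * r + l) / (a + 2 * l))) ∧
    IsMinOn (fun β : ℝ => a / 2 * (β - r) ^ 2 + l * |β * (β - 1)|)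
      Set.univ (min 0 ((a * r + l) / (a + 2 * l))) := by
  set m : ℝ := (a * r + l) / (a + 2 * l) with hmdef
  have hD : 0 < a + 2 * l := by linarith
  have hm : m * (a + 2 * l) = a * r + l := by
    rw [hmdef, div_mul_cancel₀ _ hD.ne']
  set f : ℝ → ℝ := fun β : ℝ => a / 2 * (β - r) ^ 2 + l * |β * (β - 1)| with hf
  have key : ∀ β : ℝ, f (min 0 m) ≤ f β := by
    intro β
    rcases le_or_gt m 0 with h0 | h0
    · -- β* = m
      rw [min_eq_right h0]
      have habsm : |m * (m - 1)| = m * (m - 1) :=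
        abs_of_nonneg (by nlinarith)
      rcases le_or_gt β 0 with hb | hb
      · have habs : |β * (β - 1)| = β * (β - 1) :=
          abs_of_nonneg (by nlinarith)
        simp only [hf, habs, habsm]
        nlinarith [sq_nonneg (β - m), hm]
      · rcases le_or_gt β 1 with hb1 | hb1
        · have habs : |β * (β - 1)| = -(β * (β - 1)) :=
            abs_of_nonpos (mul_nonpos_of_nonneg_of_nonpos hb.le (by linarith))
          simp only [hf, habs, habsm]
          have h1 : a / 2 * (m - r) ^ 2 + l * (m * (m - 1)) ≤ a / 2 * (0 - r) ^ 2 := by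
            nlinarith [sq_nonneg m, hm]
          nlinarith [mul_nonneg hb.le (by linarith : (0:ℝ) ≤ β - 2 * r),
            mul_nonneg (mul_nonneg hl hb.le) (by linarith : (0:ℝ) ≤ 1 - β)]
        · have habs : |β * (β - 1)| = β * (β - 1) :=
            abs_of_nonneg (mul_nonneg (by linarith) (by linarith))
          simp only [hf, habs, habsm]
          nlinarith [sq_nonneg (β - m), hm]
    · -- β* = 0
      rw [min_eq_left h0.le]
      have habsm : |(0:ℝ) * (0 - 1)| = 0 := by norm_num
      rcases le_or_gt β 0 with hb | hb
      · have habs : |β * (β - 1)| = β * (β - 1) :=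
          abs_of_nonneg (by nlinarith)
        simp only [hf, habs, habsm]
        nlinarith [sq_nonneg β, hm, mul_nonneg h0.le (neg_nonneg.mpr hb),
          mul_pos hD h0]
      · rcases le_or_gt β 1 with hb1 | hb1
        · have habs : |β * (β - 1)| = -(β * (β - 1)) :=
            abs_of_nonpos (mul_nonpos_of_nonneg_of_nonpos hb.le (by linarith))
          simp only [hf, habs, habsm]
          nlinarith [mul_nonneg hb.le (by linarith : (0:ℝ) ≤ β - 2 * r),
            mul_nonneg (mul_nonneg hl hb.le) (by linarith : (0:ℝ) ≤ 1 - β)]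
        · have habs : |β * (β - 1)| = β * (β - 1) :=
            abs_of_nonneg (mul_nonneg (by linarith) (by linarith))
          simp only [hf, habs, habsm]
          nlinarith [mul_nonneg hb.le (by linarith : (0:ℝ) ≤ β - 2 * r),
            mul_nonneg (mul_nonneg hl hb.le) (by linarith : (0:ℝ) ≤ β - 1)]
  constructor
  · intro β _
    exact key β
  · intro β _
    exact key β
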